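/- Let d ∈ ℕ and α, β > 0. Let T₀ ⊂ ℝ^d be a regular d-simplex of unit volume. Then for every d-simplex T ⊂ ℝ^d of unit volume, E_{∞;α,β}(T) ≥ E_{∞;α,β}(T₀); i.e., among all simplices of unit volume, the asymmetric uniform error of best approximation of Q(x) = Σ_{j=1}^d x_j² by affine functions is minimized by the regular simplex. -/

import Mathlib

open MeasureTheory Metric Set

/-- The asymmetric uniform error of best approximation of `Q(x) = ∑ xⱼ²` by affine
functions `x ↦ ⟪a, x⟫ + c` on the set `T ⊆ ℝ^d`. -/
noncomputable def EinfAB (d : ℕ) (α β : ℝ) (T : Set (EuclideanSpace ℝ (Fin d))) : ℝ :=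
  ⨅ (a : EuclideanSpace ℝ (Fin d)) (c : ℝ),
    ⨆ x : T,
      (α * max ((∑ j, x.1 j ^ 2) - ((inner ℝ a x.1 : ℝ) + c)) 0 +
        β * max (-((∑ j, x.1 j ^ 2) - ((inner ℝ a x.1 : ℝ) + c))) 0)

namespace RegSimplexAux

open Matrix RealInnerProductSpace

/-! ### AM–GM and a trace bound on determinants of PSD matrices -/

lemma amgm {n : ℕ} (hn : 0 < n) (z : Fin n → ℝ) (hz : ∀ i, 0 ≤ z i) :
    ∏ i, z i ≤ ((∑ i, z i) / n) ^ n := by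
  have hn' : (n : ℝ) ≠ 0 := Nat.cast_ne_zero.2 hn.ne'
  have hg := Real.geom_mean_le_arith_mean_weighted Finset.univ (fun _ => (n : ℝ)⁻¹) z
    (fun i _ => by positivity) (by simp [Finset.card_univ, mul_comm, mul_inv_cancel₀ hn'])
    (fun i _ => hz i)
  have hP : (∏ i, z i ^ ((n : ℝ)⁻¹)) ^ n = ∏ i, z i := by
    rw [← Finset.prod_pow]
    refine Finset.prod_congr rfl fun i _ => ?_
    rw [← Real.rpow_natCast (z i ^ ((n : ℝ)⁻¹)) n, ← Real.rpow_mul (hz i),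
      inv_mul_cancel₀ hn', Real.rpow_one]
  calc ∏ i, z i = (∏ i, z i ^ ((n : ℝ)⁻¹)) ^ n := hP.symm
    _ ≤ ((∑ i, z i) / n) ^ n := by
        apply pow_le_pow_left₀ (Finset.prod_nonneg fun i _ => Real.rpow_nonneg (hz i) _)
        calc (∏ i, z i ^ ((n:ℝ)⁻¹)) ≤ ∑ i, (n:ℝ)⁻¹ * z i := hg
          _ = (∑ i, z i) / n := by rw [← Finset.mul_sum]; ring

lemma psd_det_le {n : ℕ} (hn : 0 < n) {A : Matrix (Fin n) (Fin n) ℝ}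
    (hA : A.PosSemidef) : A.det ≤ (A.trace / n) ^ n := by
  have hH := hA.isHermitian
  have htr : A.trace = ∑ i, hH.eigenvalues i := by
    simpa using hH.trace_eq_sum_eigenvalues
  have hdet : A.det = ∏ i, hH.eigenvalues i := by
    rw [hH.det_eq_prod_eigenvalues]; norm_num
  rw [hdet, htr]
  exact amgm hn _ (fun i => hA.eigenvalues_nonneg i)

/-! ### The vertex matrices of a simplex -/

variable {d : ℕ}

noncomputable def NM (v : Fin (d+1) → EuclideanSpace ℝ (Fin d))
    (p : EuclideanSpace ℝ (Fin d)) (t : ℝ) : Matrix (Fin (d+1)) (Fin (d+1)) ℝ :=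
  Matrix.of fun i => Fin.cons t (fun j => (v i - p) j)

noncomputable def AM (v : Fin (d+1) → EuclideanSpace ℝ (Fin d)) : Matrix (Fin d) (Fin d) ℝ :=
  Matrix.of fun i j => (v i.succ - v 0) j

lemma det_NM (v : Fin (d+1) → EuclideanSpace ℝ (Fin d)) (p : EuclideanSpace ℝ (Fin d)) (t : ℝ) :
    (NM v p t).det = t * (AM v).det := by
  set N := NM v p t with hN
  set N' : Matrix (Fin (d+1)) (Fin (d+1)) ℝ :=
    Matrix.of fun i j => if i = 0 then N 0 j else N i j - N 0 j with hN'
  have h1 : N.det = N'.det := by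
    refine Matrix.det_eq_of_forall_row_eq_smul_add_const
      (fun i => if i = 0 then 0 else 1) 0 (by simp) (fun i j => ?_)
    by_cases hi : i = 0 <;> simp [hN', hi]
  rw [h1, Matrix.det_succ_column_zero]
  rw [Finset.sum_eq_single 0]
  · have hsub : (N'.submatrix (Fin.succAbove 0) Fin.succ) = AM v := by
      ext i j
      simp only [Matrix.submatrix_apply, Fin.succAbove_zero, hN', Matrix.of_apply]
      have : (i.succ : Fin (d+1)) ≠ 0 := Fin.succ_ne_zero i
      simp only [this, if_false, hN, NM, Matrix.of_apply, Fin.cons_succ, AM]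
      simp [PiLp.sub_apply]
    have h00 : N' 0 0 = t := by simp [hN', hN, NM]
    rw [hsub, h00]
    simp
  · intro i _ hi
    have : N' i 0 = 0 := by
      simp only [hN', Matrix.of_apply, hi, if_false, hN, NM, Fin.cons_zero]
      simp
    rw [this]; ring
  · simp

lemma gram_apply (v : Fin (d+1) → EuclideanSpace ℝ (Fin d)) (p : EuclideanSpace ℝ (Fin d))
    (t : ℝ) (i j : Fin (d+1)) :
    (NM v p t * (NM v p t)ᵀ) i j = t^2 + (inner ℝ (v i - p) (v j - p) : ℝ) := by
  simp only [Matrix.mul_apply, Matrix.transpose_apply, NM, Matrix.of_apply]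
  rw [show (inner ℝ (v i - p) (v j - p) : ℝ) = ∑ k, (v i - p) k * (v j - p) k by
    simp [PiLp.inner_apply, RCLike.inner_apply, map_sum]
    exact Finset.sum_congr rfl fun _ _ => mul_comm _ _]
  rw [show ∀ (f g : Fin d → ℝ), (∑ k : Fin (d+1), Fin.cons t f k * Fin.cons t g k)
      = t * t + ∑ k : Fin d, f k * g k from fun f g => by
    rw [Fin.sum_univ_succ]; simp]
  ring

lemma gram_psd (v : Fin (d+1) → EuclideanSpace ℝ (Fin d)) (p : EuclideanSpace ℝ (Fin d))
    (t : ℝ) : (NM v p t * (NM v p t)ᵀ).PosSemidef := by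
  have := Matrix.posSemidef_self_mul_conjTranspose (NM v p t)
  rwa [Matrix.conjTranspose_eq_transpose_of_trivial] at this

lemma gram_det (v : Fin (d+1) → EuclideanSpace ℝ (Fin d)) (p : EuclideanSpace ℝ (Fin d))
    (t : ℝ) : (NM v p t * (NM v p t)ᵀ).det = ((NM v p t).det)^2 := by
  rw [Matrix.det_mul, Matrix.det_transpose]; ring

lemma trace_gram (v : Fin (d+1) → EuclideanSpace ℝ (Fin d)) (p : EuclideanSpace ℝ (Fin d))
    (t : ℝ) : (NM v p t * (NM v p t)ᵀ).trace
      = ∑ i, (t^2 + (inner ℝ (v i - p) (v i - p) : ℝ)) := by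
  rw [Matrix.trace]
  exact Finset.sum_congr rfl fun i _ => gram_apply v p t i i

lemma sq_det_NM_le (v : Fin (d+1) → EuclideanSpace ℝ (Fin d)) (p : EuclideanSpace ℝ (Fin d))
    {t ρsq : ℝ}
    (hvert : ∀ i, (inner ℝ (v i - p) (v i - p) : ℝ) ≤ ρsq) :
    ((NM v p t).det)^2 ≤ (t^2 + ρsq)^(d+1) := by
  have h := psd_det_le (Nat.succ_pos d) (gram_psd v p t)
  rw [gram_det] at h
  refine h.trans ?_
  have hcast : ((d.succ : ℕ) : ℝ) = (d:ℝ) + 1 := by push_cast; ring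
  rw [hcast]
  have htr : (NM v p t * (NM v p t)ᵀ).trace ≤ ((d:ℝ)+1) * (t^2 + ρsq) := by
    rw [trace_gram]
    calc ∑ i, (t^2 + (inner ℝ (v i - p) (v i - p) : ℝ)) ≤ ∑ _i : Fin (d+1), (t^2 + ρsq) :=
          Finset.sum_le_sum fun i _ => by linarith [hvert i]
      _ = ((d:ℝ)+1) * (t^2 + ρsq) := by
          rw [Finset.sum_const, Finset.card_univ, Fintype.card_fin]; push_cast; ring
  have hnn : (0:ℝ) ≤ (NM v p t * (NM v p t)ᵀ).trace / ((d:ℝ)+1) := by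
    rw [trace_gram]
    have hs : (0:ℝ) ≤ ∑ i, (t^2 + (inner ℝ (v i - p) (v i - p) : ℝ)) :=
      Finset.sum_nonneg fun i _ => add_nonneg (sq_nonneg t) real_inner_self_nonneg
    positivity
  show ((NM v p t * (NM v p t)ᵀ).trace / ((d:ℝ)+1)) ^ (d+1) ≤ (t ^ 2 + ρsq) ^ (d + 1)
  apply pow_le_pow_left₀ hnn
  rw [div_le_iff₀ (by positivity)]
  linarith

lemma sq_det_NM_eq (v : Fin (d+1) → EuclideanSpace ℝ (Fin d)) (p : EuclideanSpace ℝ (Fin d))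
    (t c : ℝ)
    (hgram : ∀ i j, t^2 + (inner ℝ (v i - p) (v j - p) : ℝ) = if i = j then c else 0) :
    ((NM v p t).det)^2 = c^(d+1) := by
  have hmat : NM v p t * (NM v p t)ᵀ = c • (1 : Matrix (Fin (d+1)) (Fin (d+1)) ℝ) := by
    ext i j
    rw [gram_apply, hgram]
    by_cases h : i = j <;> simp [h, Matrix.one_apply]
  rw [← gram_det, hmat, Matrix.det_smul, Matrix.det_one]
  simp

noncomputable def stdW (d : ℕ) : Fin (d+1) → EuclideanSpace ℝ (Fin d) :=
  Fin.cons 0 (fun i => (EuclideanSpace.basisFun (Fin d) ℝ).toBasis i)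

noncomputable def stdS (d : ℕ) : Set (EuclideanSpace ℝ (Fin d)) :=
  convexHull ℝ (Set.range (stdW d))

lemma vol_eq (v : Fin (d+1) → EuclideanSpace ℝ (Fin d)) :
    volume (convexHull ℝ (Set.range v))
      = ENNReal.ofReal |(AM v).det| * volume (stdS d) := by
  classical
  set b := (EuclideanSpace.basisFun (Fin d) ℝ).toBasis with hb
  set f : EuclideanSpace ℝ (Fin d) →ₗ[ℝ] EuclideanSpace ℝ (Fin d) :=
    b.constr ℝ (fun i => v i.succ - v 0) with hf
  have hdet : |LinearMap.det f| = |(AM v).det| := by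
    rw [← LinearMap.det_toMatrix b f]
    congr 1
    rw [← Matrix.det_transpose]
    congr 1
    ext i j
    rw [Matrix.transpose_apply, LinearMap.toMatrix_apply, hf, b.constr_basis]
    simp [hb, AM, OrthonormalBasis.coe_toBasis_repr_apply, EuclideanSpace.basisFun_repr]
  set g : EuclideanSpace ℝ (Fin d) →ᵃ[ℝ] EuclideanSpace ℝ (Fin d) :=
    f.toAffineMap + AffineMap.const ℝ _ (v 0) with hg
  have hgx : ∀ x, g x = v 0 + f x := by
    intro x; simp [hg, add_comm]
  have hgw : g ∘ stdW d = v := by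
    funext i
    refine Fin.cases ?_ (fun i => ?_) i
    · simp [hgx, stdW]
    · simp only [Function.comp_apply, hgx, stdW, Fin.cons_succ, hf]
      rw [b.constr_basis]
      abel
  have himg : convexHull ℝ (Set.range v) = (fun x => v 0 + x) '' (f '' (stdS d)) := by
    rw [stdS, ← Set.image_comp]
    have h2 : ((fun x => v 0 + x) ∘ fun x => f x) = ⇑g := by
      funext x; simp [hgx]
    rw [h2, AffineMap.image_convexHull, ← Set.range_comp, hgw]
  rw [himg, Set.image_add_left, measure_preimage_add,
    Measure.addHaar_image_linearMap, hdet]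

lemma regular_facts (hd : 0 < d) (v₀ : Fin (d+1) → EuclideanSpace ℝ (Fin d))
    (h₀ind : AffineIndependent ℝ v₀)
    (h₀reg : ∀ i j k l : Fin (d + 1), i ≠ j → k ≠ l →
      dist (v₀ i) (v₀ j) = dist (v₀ k) (v₀ l)) :
    ∃ (g : EuclideanSpace ℝ (Fin d)) (ssq : ℝ), 0 < ssq ∧
      (∀ i, ‖v₀ i - g‖^2 = d * ssq / (2*((d:ℝ)+1))) ∧
      (∀ i j, i ≠ j → ⟪v₀ i - g, v₀ j - g⟫ = - ssq / (2*((d:ℝ)+1))) := by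
  classical
  have h01 : (0 : Fin (d+1)) ≠ 1 := by
    apply Fin.ne_of_val_ne
    simp [Fin.val_one, Nat.mod_eq_of_lt (by omega : 1 < d+1)]
  set ssq := dist (v₀ 0) (v₀ 1) ^ 2 with hssq
  have hdist : ∀ i j, i ≠ j → ‖v₀ i - v₀ j‖^2 = ssq := by
    intro i j hij
    rw [← dist_eq_norm, hssq, h₀reg i j 0 1 hij h01]
  have hssq_pos : 0 < ssq := by
    have hne : v₀ 0 ≠ v₀ 1 := fun h => h01 (h₀ind.injective h)
    have := dist_pos.2 hne
    positivity
  set g : EuclideanSpace ℝ (Fin d) := (((d:ℝ)+1)⁻¹) • ∑ i, v₀ i with hg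
  have hd1 : ((d:ℝ)+1) ≠ 0 := by positivity
  have hsum : ∑ i, (v₀ i - g) = 0 := by
    rw [Finset.sum_sub_distrib, Finset.sum_const, Finset.card_univ, Fintype.card_fin, hg,
      ← Nat.cast_smul_eq_nsmul ℝ, smul_smul]
    push_cast
    rw [mul_inv_cancel₀ hd1, one_smul, sub_self]
  set Rf : Fin (d+1) → ℝ := fun i => ‖v₀ i - g‖^2 with hRf
  have hpol : ∀ i j, ⟪v₀ i - g, v₀ j - g⟫ = (Rf i + Rf j - ‖v₀ i - v₀ j‖^2)/2 := by
    intro i j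
    have h := norm_sub_sq_real (v₀ i - g) (v₀ j - g)
    have h2 : v₀ i - g - (v₀ j - g) = v₀ i - v₀ j := by abel
    rw [h2] at h
    rw [hRf]; simp only []
    linarith
  have key : ∀ i, ((d:ℝ)+1) * Rf i + ∑ j, Rf j = d * ssq := by
    intro i
    have h0 : ⟪v₀ i - g, ∑ j, (v₀ j - g)⟫ = 0 := by rw [hsum, inner_zero_right]
    rw [inner_sum] at h0
    have h1 : ∑ j, ⟪v₀ i - g, v₀ j - g⟫
        = ∑ j, (Rf i + Rf j - ‖v₀ i - v₀ j‖^2)/2 :=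
      Finset.sum_congr rfl fun j _ => hpol i j
    have h2 : ∑ j, ‖v₀ i - v₀ j‖^2 = d * ssq := by
      have hterm : ∀ j ∈ Finset.univ, ‖v₀ i - v₀ j‖^2
          = ssq - (if j = i then ssq else 0) := by
        intro j _
        by_cases h : j = i
        · simp [h]
        · rw [hdist i j (Ne.symm h)]; simp [h]
      rw [Finset.sum_congr rfl hterm, Finset.sum_sub_distrib, Finset.sum_const,
        Finset.card_univ, Fintype.card_fin, Finset.sum_ite_eq' Finset.univ i (fun _ => ssq)]
      simp; push_cast; ring
    have h3 : ∑ j, (Rf i + Rf j - ‖v₀ i - v₀ j‖^2)/2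
        = (((d:ℝ)+1) * Rf i + ∑ j, Rf j - d*ssq)/2 := by
      rw [← Finset.sum_div, Finset.sum_sub_distrib, Finset.sum_add_distrib, Finset.sum_const,
        Finset.card_univ, Fintype.card_fin, h2]
      push_cast; ring
    rw [h1, h3] at h0
    linarith
  have hconst : ∀ i, Rf i = Rf 0 := by
    intro i
    have k1 := key i
    have k0 := key 0
    have : ((d:ℝ)+1) > 0 := by positivity
    nlinarith
  have hsumR : ∑ j, Rf j = ((d:ℝ)+1) * Rf 0 := by
    rw [Finset.sum_congr rfl (fun j _ => hconst j), Finset.sum_const, Finset.card_univ,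
      Fintype.card_fin]
    push_cast; ring
  have hR0 : Rf 0 = d * ssq / (2*((d:ℝ)+1)) := by
    have k0 := key 0
    rw [hsumR] at k0
    field_simp
    linarith
  refine ⟨g, ssq, hssq_pos, fun i => (hconst i).trans hR0, fun i j hij => ?_⟩
  rw [hpol i j, hconst i, hconst j, hR0, hdist i j hij]
  field_simp
  ring

lemma Qsum (x : EuclideanSpace ℝ (Fin d)) : ∑ j, x j ^ 2 = ‖x‖^2 := by
  rw [EuclideanSpace.norm_eq, Real.sq_sqrt (Finset.sum_nonneg fun i _ => sq_nonneg _)]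
  simp [sq_abs]

lemma err_eq (a : EuclideanSpace ℝ (Fin d)) (c : ℝ) (x : EuclideanSpace ℝ (Fin d)) :
    (∑ j, x j ^ 2) - ((inner ℝ a x : ℝ) + c)
      = ‖x - (2:ℝ)⁻¹ • a‖^2 - (‖(2:ℝ)⁻¹ • a‖^2 + c) := by
  rw [Qsum, norm_sub_sq_real]
  have : (inner ℝ x ((2:ℝ)⁻¹ • a) : ℝ) = 2⁻¹ * (inner ℝ a x : ℝ) := by
    rw [real_inner_smul_right, real_inner_comm]
  rw [this]; ring

lemma iSup_nonneg_aux {α β : ℝ} (hα : 0 ≤ α) (hβ : 0 ≤ β) (T : Set (EuclideanSpace ℝ (Fin d)))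
    (a : EuclideanSpace ℝ (Fin d)) (c : ℝ) :
    0 ≤ ⨆ x : T, (α * max ((∑ j, x.1 j ^ 2) - ((inner ℝ a x.1 : ℝ) + c)) 0 +
        β * max (-((∑ j, x.1 j ^ 2) - ((inner ℝ a x.1 : ℝ) + c))) 0) :=
  Real.iSup_nonneg fun x => add_nonneg (mul_nonneg hα (le_max_right _ _))
    (mul_nonneg hβ (le_max_right _ _))

lemma upper_bound {α β : ℝ} (hα : 0 < α) (hβ : 0 < β)
    (v₀ : Fin (d+1) → EuclideanSpace ℝ (Fin d)) (g : EuclideanSpace ℝ (Fin d)) {Rsq₀ : ℝ}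
    (hR : 0 ≤ Rsq₀) (hvert : ∀ i, ‖v₀ i - g‖^2 = Rsq₀) :
    EinfAB d α β (convexHull ℝ (Set.range v₀)) ≤ α * β / (α + β) * Rsq₀ := by
  classical
  have hαβ : 0 < α + β := by linarith
  set T := convexHull ℝ (Set.range v₀) with hT
  have hne : Nonempty ↥T := ⟨⟨v₀ 0, subset_convexHull ℝ _ (mem_range_self 0)⟩⟩
  set a : EuclideanSpace ℝ (Fin d) := (2:ℝ) • g with ha
  set c : ℝ := α * Rsq₀ / (α + β) - ‖g‖^2 with hc
  have hza : (2:ℝ)⁻¹ • a = g := by rw [ha, smul_smul]; norm_num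
  -- all x in T satisfy ‖x - g‖^2 ≤ Rsq₀
  have hmem : ∀ x ∈ T, ‖x - g‖^2 ≤ Rsq₀ := by
    intro x hx
    have hsub : T ⊆ closedBall g (Real.sqrt Rsq₀) := by
      rw [hT]
      apply convexHull_min _ (convex_closedBall _ _)
      rintro y ⟨i, rfl⟩
      rw [mem_closedBall, dist_eq_norm, show Real.sqrt Rsq₀ = ‖v₀ i - g‖ by
        rw [← hvert i, Real.sqrt_sq (norm_nonneg _)]]
    have := hsub hx
    rw [mem_closedBall, dist_eq_norm] at this
    calc ‖x - g‖^2 ≤ (Real.sqrt Rsq₀)^2 := pow_le_pow_left₀ (norm_nonneg _) this 2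
      _ = Rsq₀ := Real.sq_sqrt hR
  -- the sup with this a, c is at most the target
  have hsup : (⨆ x : T, (α * max ((∑ j, x.1 j ^ 2) - ((inner ℝ a x.1 : ℝ) + c)) 0 +
      β * max (-((∑ j, x.1 j ^ 2) - ((inner ℝ a x.1 : ℝ) + c))) 0)) ≤ α * β / (α + β) * Rsq₀ := by
    apply ciSup_le
    intro x
    have he := err_eq a c x.1
    rw [hza] at he
    set e := (∑ j, x.1 j ^ 2) - ((inner ℝ a x.1 : ℝ) + c) with hedef
    have hx2 := hmem x.1 x.2
    have h0 : 0 ≤ ‖x.1 - g‖^2 := sq_nonneg _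
    have heval : e = ‖x.1 - g‖^2 - α * Rsq₀ / (α + β) := by rw [he, hc]; ring
    have hsplit : α * Rsq₀ / (α + β) + β * Rsq₀ / (α + β) = Rsq₀ := by
      field_simp
    have he_ub : e ≤ β * Rsq₀ / (α + β) := by rw [heval]; linarith
    have he_lb : -e ≤ α * Rsq₀ / (α + β) := by rw [heval]; linarith
    rcases le_or_gt e 0 with h | h
    · rw [max_eq_right h]
      have : max (-e) 0 ≤ α * Rsq₀ / (α + β) := by
        apply max_le he_lb (by positivity)
      calc α * 0 + β * max (-e) 0 ≤ α * 0 + β * (α * Rsq₀ / (α + β)) := by nlinarith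
        _ = α * β / (α + β) * Rsq₀ := by ring
    · rw [max_eq_right (by linarith : -e ≤ 0), max_eq_left h.le]
      calc α * e + β * 0 ≤ α * (β * Rsq₀ / (α + β)) + β * 0 := by nlinarith
        _ = α * β / (α + β) * Rsq₀ := by ring
  -- conclude
  rw [EinfAB]
  refine le_trans (ciInf_le ?_ a) (le_trans (ciInf_le ?_ c) hsup)
  · refine ⟨0, ?_⟩
    rintro y ⟨a', rfl⟩
    exact le_ciInf fun c' => iSup_nonneg_aux hα.le hβ.le T a' c'
  · exact ⟨0, by rintro y ⟨c', rfl⟩; exact iSup_nonneg_aux hα.le hβ.le T a c'⟩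

set_option maxHeartbeats 1000000 in
lemma lower_bound {α β : ℝ} (hα : 0 < α) (hβ : 0 < β) (hd : 0 < d)
    (v : Fin (d+1) → EuclideanSpace ℝ (Fin d)) {Rsq₀ : ℝ} (hR0 : 0 < Rsq₀)
    (hdet : ((AM v).det)^2 = ((d:ℝ)+1)^(d+1)/(d:ℝ)^d * Rsq₀^d) :
    α * β / (α + β) * Rsq₀ ≤ EinfAB d α β (convexHull ℝ (Set.range v)) := by
  classical
  have hdR : (0:ℝ) < d := by exact_mod_cast hd
  have hαβ : 0 < α + β := by linarith
  rw [EinfAB]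
  refine le_ciInf fun a => le_ciInf fun c => ?_
  set T := convexHull ℝ (Set.range v) with hT
  have hv0T : v 0 ∈ T := subset_convexHull ℝ _ (mem_range_self 0)
  have hvT : ∀ i, v i ∈ T := fun i => subset_convexHull ℝ _ (mem_range_self i)
  have hne : Nonempty ↥T := ⟨⟨v 0, hv0T⟩⟩
  have hcomp : IsCompact T := (Set.finite_range v).isCompact_convexHull ℝ
  set z : EuclideanSpace ℝ (Fin d) := (2:ℝ)⁻¹ • a with hz
  -- minimizer of distance to z over T
  obtain ⟨x₂, hx₂T, hx₂min'⟩ := hcomp.exists_isMinOn ⟨v 0, hv0T⟩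
    (f := fun y => ‖y - z‖) (((continuous_id.sub continuous_const).norm)).continuousOn
  have hx₂min : ∀ y ∈ T, ‖x₂ - z‖ ≤ ‖y - z‖ := fun y hy => isMinOn_iff.mp hx₂min' y hy
  -- maximizing vertex
  obtain ⟨i₁, _, hi₁⟩ := Finset.exists_max_image Finset.univ (fun i => ‖v i - z‖)
    ⟨0, Finset.mem_univ 0⟩
  set ρsq : ℝ := ‖v i₁ - z‖^2 - ‖x₂ - z‖^2 with hρ
  -- first variation inequality
  have hbound : ∀ x ∈ T, 0 ≤ ⟪x₂ - z, x - x₂⟫ := by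
    intro x hx
    set ip := ⟪x₂ - z, x - x₂⟫ with hip
    set q := ‖x - x₂‖^2 with hq
    have hqnn : 0 ≤ q := sq_nonneg _
    have hkey : ∀ t : ℝ, 0 ≤ t → t ≤ 1 → 0 ≤ 2*t*ip + t^2*q := by
      intro t ht0 ht1
      have hmem : x₂ + t • (x - x₂) ∈ T := by
        have h := (convex_convexHull ℝ (Set.range v)) hx₂T hx
          (by linarith : (0:ℝ) ≤ 1 - t) ht0 (by ring)
        have heq : (1-t) • x₂ + t • x = x₂ + t • (x - x₂) := by
          rw [smul_sub, sub_smul, one_smul]; abel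
        rwa [heq] at h
      have hle := hx₂min _ hmem
      have hsq : ‖x₂ - z‖^2 ≤ ‖x₂ + t • (x - x₂) - z‖^2 :=
        pow_le_pow_left₀ (norm_nonneg _) hle 2
      have hexp : ‖x₂ + t • (x - x₂) - z‖^2 = ‖x₂ - z‖^2 + 2*t*ip + t^2*q := by
        have h1 : x₂ + t • (x - x₂) - z = (x₂ - z) + t • (x - x₂) := by abel
        rw [h1, norm_add_sq_real, real_inner_smul_right, norm_smul]
        simp only [Real.norm_eq_abs, mul_pow, sq_abs]
        rw [hip, hq]; ring
      linarith [hexp ▸ hsq]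
    by_contra hneg
    push_neg at hneg
    rcases eq_or_lt_of_le hqnn with hq0 | hqpos
    · have := hkey 1 zero_le_one le_rfl
      rw [← hq0] at this; nlinarith
    · set t := min 1 (-ip/q) with ht
      have htpos : 0 < t := lt_min one_pos (div_pos (by linarith) hqpos)
      have ht1 : t ≤ 1 := min_le_left _ _
      have ht2 : t ≤ -ip/q := min_le_right _ _
      have := hkey t htpos.le ht1
      have h3 : t * q ≤ -ip := (le_div_iff₀ hqpos).mp ht2
      nlinarith
  -- all vertices lie in the ball around x₂ of squared radius ρsq
  have hvert : ∀ i, (inner ℝ (v i - x₂) (v i - x₂) : ℝ) ≤ ρsq := by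
    intro i
    have hb := hbound (v i) (hvT i)
    have hcomm : ⟪x₂ - z, v i - x₂⟫ = ⟪v i - x₂, x₂ - z⟫ := real_inner_comm _ _
    have hsplit : ⟪v i - z, x₂ - z⟫ = ⟪v i - x₂, x₂ - z⟫ + ‖x₂ - z‖^2 := by
      have h1 : v i - z = (v i - x₂) + (x₂ - z) := by abel
      rw [h1, inner_add_left, real_inner_self_eq_norm_sq]
    have hexp : ‖v i - x₂‖^2 = ‖v i - z‖^2 - 2*⟪v i - z, x₂ - z⟫ + ‖x₂ - z‖^2 := by
      have h1 : (v i - z) - (x₂ - z) = v i - x₂ := by abel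
      rw [← h1, norm_sub_sq_real]
    have hmax : ‖v i - z‖^2 ≤ ‖v i₁ - z‖^2 :=
      pow_le_pow_left₀ (norm_nonneg _) (hi₁ i (Finset.mem_univ i)) 2
    rw [real_inner_self_eq_norm_sq]
    rw [hcomm] at hb
    rw [hρ]
    linarith [hexp, hsplit]
  have hρnn : 0 ≤ ρsq := le_trans real_inner_self_nonneg (hvert i₁)
  -- determinant chain: Rsq₀ ≤ ρsq
  have hRρ : Rsq₀ ≤ ρsq := by
    rcases eq_or_lt_of_le hρnn with hρ0 | hρpos
    · -- degenerate: all vertices equal x₂, so det = 0, contradiction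
      exfalso
      have hveq : ∀ i, v i = x₂ := by
        intro i
        have h1 : (inner ℝ (v i - x₂) (v i - x₂) : ℝ) ≤ 0 := by rw [hρ0]; exact hvert i
        have h2 := real_inner_self_nonneg (x := v i - x₂)
        have h3 : (inner ℝ (v i - x₂) (v i - x₂) : ℝ) = 0 := le_antisymm h1 h2
        have h4 : v i - x₂ = 0 := inner_self_eq_zero.mp h3
        rwa [sub_eq_zero] at h4
      have hAM : AM v = 0 := by
        ext i j
        simp [AM, hveq i.succ, hveq 0]
      rw [hAM] at hdet
      have hC : (0:ℝ) < ((d:ℝ)+1)^(d+1)/(d:ℝ)^d * Rsq₀^d := by positivity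
      haveI : Nonempty (Fin d) := ⟨⟨0, hd⟩⟩
      rw [Matrix.det_zero, zero_pow two_ne_zero] at hdet
      linarith
    · set t : ℝ := Real.sqrt (ρsq / d) with htdef
      have htsq : t^2 = ρsq / d := Real.sq_sqrt (by positivity)
      have hle := sq_det_NM_le v x₂ (t := t) hvert
      rw [det_NM, mul_pow, htsq, hdet] at hle
      have hstep : ρsq/(d:ℝ) + ρsq = ρsq * ((d:ℝ)+1) / d := by field_simp; ring
      rw [hstep, div_pow, mul_pow] at hle
      -- hle : ρsq/d * (((d+1)^(d+1)/d^d) * Rsq₀^d) ≤ ρsq^(d+1) * (d+1)^(d+1) / d^(d+1)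
      have hd0 : (d:ℝ) ≠ 0 := hdR.ne'
      have hfac : (0:ℝ) < ρsq * ((d:ℝ)+1)^(d+1) / (d:ℝ)^(d+1) := by positivity
      have e1 : ρsq/(d:ℝ) * (((d:ℝ)+1)^(d+1)/(d:ℝ)^d * Rsq₀^d)
          = Rsq₀^d * (ρsq * ((d:ℝ)+1)^(d+1) / (d:ℝ)^(d+1)) := by
        rw [pow_succ (d:ℝ)]; field_simp
      have e2 : ρsq^(d+1) * ((d:ℝ)+1)^(d+1) / (d:ℝ)^(d+1)
          = ρsq^d * (ρsq * ((d:ℝ)+1)^(d+1) / (d:ℝ)^(d+1)) := by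
        rw [pow_succ ρsq]; field_simp
      rw [e1, e2] at hle
      have := le_of_mul_le_mul_right hle hfac
      exact (pow_le_pow_iff_left₀ hR0.le (by linarith [hρpos]) hd.ne').1 this
  -- now bound the sup from below
  set H : EuclideanSpace ℝ (Fin d) → ℝ := fun x =>
    α * max (‖x - z‖^2 - (‖z‖^2 + c)) 0 +
      β * max (-(‖x - z‖^2 - (‖z‖^2 + c))) 0 with hH
  have hGeq : (fun x : T =>
      α * max ((∑ j, x.1 j ^ 2) - ((inner ℝ a x.1 : ℝ) + c)) 0 +
        β * max (-((∑ j, x.1 j ^ 2) - ((inner ℝ a x.1 : ℝ) + c))) 0)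
      = fun x : T => H x.1 := by
    funext x
    rw [err_eq a c x.1, ← hz, hH]
  rw [hGeq]
  have hHcont : Continuous H := by
    have he : Continuous fun x : EuclideanSpace ℝ (Fin d) => ‖x - z‖^2 - (‖z‖^2 + c) :=
      (((continuous_id.sub continuous_const).norm).pow 2).sub continuous_const
    exact (continuous_const.mul (he.max continuous_const)).add
      (continuous_const.mul (he.neg.max continuous_const))
  have hbdd : BddAbove (Set.range fun x : T => H x.1) := by
    have h1 : (Set.range fun x : T => H x.1) = H '' T := (Set.image_eq_range H T).symm
    rw [h1]
    exact (hcomp.image hHcont).bddAbove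
  set S := ⨆ x : T, H x.1 with hS
  have hmemS : ∀ y : T, H y.1 ≤ S := fun y => le_ciSup hbdd y
  have hS0 : 0 ≤ S := Real.iSup_nonneg fun x => add_nonneg
    (mul_nonneg hα.le (le_max_right _ _)) (mul_nonneg hβ.le (le_max_right _ _))
  set M : ℝ := ‖v i₁ - z‖^2 - (‖z‖^2 + c) with hM
  set m : ℝ := ‖x₂ - z‖^2 - (‖z‖^2 + c) with hm
  have hMm : M - m = ρsq := by rw [hM, hm, hρ]; ring
  have hHM : H (v i₁) = α * max M 0 + β * max (-M) 0 := by rw [hH]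
  have hHm : H x₂ = α * max m 0 + β * max (-m) 0 := by rw [hH]
  have hSM : α * M ≤ S := by
    refine le_trans ?_ (hmemS ⟨v i₁, hvT i₁⟩)
    rw [hHM]
    have h1 : α * M ≤ α * max M 0 :=
      mul_le_mul_of_nonneg_left (le_max_left M 0) hα.le
    have h2 : 0 ≤ β * max (-M) 0 := mul_nonneg hβ.le (le_max_right _ _)
    linarith
  have hSm : β * (-m) ≤ S := by
    refine le_trans ?_ (hmemS ⟨x₂, hx₂T⟩)
    rw [hHm]
    have h1 : β * (-m) ≤ β * max (-m) 0 :=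
      mul_le_mul_of_nonneg_left (le_max_left (-m) 0) hβ.le
    have h2 : 0 ≤ α * max m 0 := mul_nonneg hα.le (le_max_right _ _)
    linarith
  show α * β / (α + β) * Rsq₀ ≤ S
  rw [div_mul_eq_mul_div, div_le_iff₀ hαβ]
  have p1 : β * (α * M) ≤ β * S := mul_le_mul_of_nonneg_left hSM hβ.le
  have p2 : α * (β * (-m)) ≤ α * S := mul_le_mul_of_nonneg_left hSm hα.le
  have p3 : α * β * Rsq₀ ≤ α * β * (M - m) := by
    rw [hMm]
    exact mul_le_mul_of_nonneg_left hRρ (by positivity)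
  nlinarith

end RegSimplexAux

open RegSimplexAux Matrix RealInnerProductSpace in
/-- Among all `d`-simplices of unit volume, the asymmetric uniform error of best affine
approximation of `Q(x) = ∑ xⱼ²` is minimized by the regular simplex. -/
theorem regular_simplex_minimizes_asymmetric_uniform_error
    (d : ℕ) (hd : 0 < d) (α β : ℝ) (hα : 0 < α) (hβ : 0 < β)
    (v₀ v : Fin (d + 1) → EuclideanSpace ℝ (Fin d))
    (h₀ind : AffineIndependent ℝ v₀)
    (h₀reg : ∀ i j k l : Fin (d + 1), i ≠ j → k ≠ l →
      dist (v₀ i) (v₀ j) = dist (v₀ k) (v₀ l))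
    (h₀vol : volume (convexHull ℝ (Set.range v₀)) = 1)
    (hind : AffineIndependent ℝ v)
    (hvol : volume (convexHull ℝ (Set.range v)) = 1) :
    EinfAB d α β (convexHull ℝ (Set.range v)) ≥
      EinfAB d α β (convexHull ℝ (Set.range v₀)) := by
  classical
  obtain ⟨g, ssq, hssq, hRsq, hγ⟩ := regular_facts hd v₀ h₀ind h₀reg
  have hdR : (0:ℝ) < d := by exact_mod_cast hd
  set Rsq₀ : ℝ := d * ssq / (2*((d:ℝ)+1)) with hRsq₀def
  have hR0 : 0 < Rsq₀ := by positivity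
  -- the determinant of the regular simplex
  set t₀ : ℝ := Real.sqrt (ssq/(2*((d:ℝ)+1))) with ht₀
  have ht₀sq : t₀^2 = ssq/(2*((d:ℝ)+1)) := Real.sq_sqrt (by positivity)
  have hgram : ∀ i j, t₀^2 + (inner ℝ (v₀ i - g) (v₀ j - g) : ℝ)
      = if i = j then ssq/2 else 0 := by
    intro i j
    by_cases h : i = j
    · subst h
      rw [if_pos rfl, ht₀sq, real_inner_self_eq_norm_sq, hRsq i, hRsq₀def]
      field_simp
      ring
    · rw [if_neg h, ht₀sq, hγ i j h]
      field_simp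
      ring
  have hdet₀ : t₀^2 * ((AM v₀).det)^2 = (ssq/2)^(d+1) := by
    rw [← mul_pow, ← det_NM v₀ g t₀, sq_det_NM_eq v₀ g t₀ (ssq/2) hgram]
  have hAv₀ : ((AM v₀).det)^2 = ((d:ℝ)+1) * (ssq/2)^d := by
    have hne : ssq/(2*((d:ℝ)+1)) ≠ 0 := by positivity
    apply mul_left_cancel₀ hne
    rw [← ht₀sq, hdet₀, ht₀sq, pow_succ]
    field_simp
  have hAv₀' : ((AM v₀).det)^2 = ((d:ℝ)+1)^(d+1)/(d:ℝ)^d * Rsq₀^d := by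
    rw [hAv₀, hRsq₀def]
    rw [div_pow, div_pow, mul_pow, mul_pow, pow_succ]
    field_simp
  -- equality of determinants from equal volumes
  have h1 : ENNReal.ofReal |(AM v).det| * volume (stdS d) = 1 := (vol_eq v).symm.trans hvol
  have h2 : ENNReal.ofReal |(AM v₀).det| * volume (stdS d) = 1 := (vol_eq v₀).symm.trans h₀vol
  have hS0 : volume (stdS d) ≠ 0 := by
    intro h; rw [h, mul_zero] at h1; exact one_ne_zero h1.symm
  have hStop : volume (stdS d) ≠ ⊤ := by
    intro h
    rw [h] at h1
    rcases eq_or_ne (ENNReal.ofReal |(AM v).det|) 0 with h0 | h0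
    · rw [h0, zero_mul] at h1; exact one_ne_zero h1.symm
    · rw [ENNReal.mul_top h0] at h1; exact ENNReal.top_ne_one h1
  have hcancel : ENNReal.ofReal |(AM v).det| = ENNReal.ofReal |(AM v₀).det| :=
    (ENNReal.mul_left_inj hS0 hStop).mp (h1.trans h2.symm)
  have habs : |(AM v).det| = |(AM v₀).det| := by
    rwa [ENNReal.ofReal_eq_ofReal_iff (abs_nonneg _) (abs_nonneg _)] at hcancel
  have hdetsq : ((AM v).det)^2 = ((d:ℝ)+1)^(d+1)/(d:ℝ)^d * Rsq₀^d := by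
    rw [← sq_abs, habs, sq_abs, hAv₀']
  -- conclude
  rw [ge_iff_le]
  exact le_trans (upper_bound hα hβ v₀ g hR0.le (fun i => hRsq i))
    (lower_bound hα hβ hd v hR0 hdetsq)
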